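/- For every prime p > 3: ∑_{j=1}^{p-1} 1/[j]_q² ≡ -((p-1)(p-5)/12)(1-q)² (mod [p]_q), in the localization of ℚ[q] at [p]_q. -/

import Mathlib

open Polynomial Finset

/-- `[n]_q = 1 + q + ⋯ + q^(n-1)` as a polynomial in `ℚ[q]`. -/
noncomputable def qnum (n : ℕ) : ℚ[X] := ∑ i ∈ Finset.range n, X ^ i

/-- The embedding of `ℚ[q]` into the field of rational functions `ℚ(q)`. -/
noncomputable def Φ : ℚ[X] →+* RatFunc ℚ := algebraMap _ _

/-- `ModPow p k x` says that `x` lies in the ideal generated by `[p]_q ^ k` in the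
localization of `ℚ[q]` at the polynomials coprime to the irreducible polynomial
`[p]_q`: that is, `x = [p]_q ^ k · a / b` with `[p]_q ∤ b`. -/
def ModPow (p k : ℕ) (x : RatFunc ℚ) : Prop :=
  ∃ a b : ℚ[X], ¬ (qnum p ∣ b) ∧ x * Φ b = Φ (qnum p ^ k * a)


lemma aux_fsum {K : Type*} [CommRing K] (x : K) (n : ℕ) :
    (x - 1) * ∑ k ∈ Finset.range n, (k : K) * x ^ k
      = ((n : K) - 1) * x ^ n - (∑ k ∈ Finset.range n, x ^ k) + 1 := by
  induction n with
  | zero => simp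
  | succ n ih =>
    rw [Finset.sum_range_succ, Finset.sum_range_succ, mul_add, ih]
    push_cast
    ring

lemma aux_s1 {K : Type*} [CommRing K] (n : ℕ) :
    (∑ k ∈ Finset.range n, (k : K)) * 2 = (n : K) * ((n : K) - 1) := by
  induction n with
  | zero => simp
  | succ n ih =>
    rw [Finset.sum_range_succ, add_mul, ih]
    push_cast; ring

lemma aux_s2 {K : Type*} [CommRing K] (n : ℕ) :
    (∑ k ∈ Finset.range n, (k : K) ^ 2) * 6 = (n : K) * ((n : K) - 1) * (2 * (n : K) - 1) := by
  induction n with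
  | zero => simp
  | succ n ih =>
    rw [Finset.sum_range_succ, add_mul, ih]
    push_cast; ring

lemma aux_div12 {p : ℕ} (hp : p.Prime) (h3 : 3 < p) : ∃ e, (p - 1) * (p - 5) = 12 * e := by
  have h2 : p % 2 = 1 := Nat.odd_iff.1 (hp.odd_of_ne_two (by omega))
  have h3' : ¬ (3 ∣ p) := fun h => by
    have := (Nat.prime_dvd_prime_iff_eq (by norm_num) hp).1 h; omega
  obtain ⟨q, r, hr, rfl⟩ : ∃ q r, r < 6 ∧ p = 6 * q + r :=
    ⟨p / 6, p % 6, Nat.mod_lt _ (by norm_num), (Nat.div_add_mod p 6).symm⟩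
  interval_cases r
  · omega
  · obtain ⟨q', rfl⟩ : ∃ q', q = q' + 1 := ⟨q - 1, by omega⟩
    refine ⟨(q' + 1) * (3 * q' + 1), ?_⟩
    have e1 : 6 * (q' + 1) + 1 - 1 = 6 * q' + 6 := by omega
    have e2 : 6 * (q' + 1) + 1 - 5 = 6 * q' + 2 := by omega
    rw [e1, e2]; ring
  · omega
  · omega
  · omega
  · refine ⟨q * (3 * q + 2), ?_⟩
    have e1 : 6 * q + 5 - 1 = 6 * q + 4 := by omega
    have e2 : 6 * q + 5 - 5 = 6 * q := by omega
    rw [e1, e2]; ring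

lemma key_sum {K : Type*} [Field K] [CharZero K] {p : ℕ} (hp : p.Prime) (h3 : 3 < p)
    {ζ : K} (hζ : IsPrimitiveRoot ζ p) :
    ∑ j ∈ Finset.Icc 1 (p-1), ((∑ i ∈ Finset.range j, ζ ^ i)⁻¹) ^ 2
      = -((((p-1)*(p-5)/12 : ℕ)) : K) * (1 - ζ) ^ 2 := by
  have hp0 : 0 < p := hp.pos
  have hp5 : 5 ≤ p := by
    rcases Nat.lt_or_ge p 5 with h | h
    · interval_cases p <;> first | omega | (exfalso; norm_num at hp)
    · exact h
  have hpK : (p : K) ≠ 0 := Nat.cast_ne_zero.2 hp0.ne'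
  set g : ℕ → K := fun n => ∑ i ∈ Finset.range n, ζ ^ i with hgdef
  set F : ℕ → K := fun j => ∑ k ∈ Finset.range p, (k : K) * (ζ ^ j) ^ k with hFdef
  -- geometric sums
  have hfull : ∀ m : ℕ, ∑ j ∈ Finset.range p, (ζ ^ m) ^ j = if p ∣ m then (p : K) else 0 := by
    intro m
    split_ifs with h
    · rw [(hζ.pow_eq_one_iff_dvd m).2 h]; simp
    · have h1 : ζ ^ m - 1 ≠ 0 := sub_ne_zero.2 fun e => h ((hζ.pow_eq_one_iff_dvd m).1 e)
      have h2 := geom_sum_mul (ζ ^ m) p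
      rw [← pow_mul, mul_comm m p, pow_mul, hζ.pow_eq_one, one_pow, sub_self] at h2
      exact (mul_eq_zero.1 h2).resolve_right h1
  have hins : insert 0 (Finset.Icc 1 (p-1)) = Finset.range p := by
    ext x; simp only [Finset.mem_insert, Finset.mem_Icc, Finset.mem_range]; omega
  have hIcc : ∀ m : ℕ, ∑ j ∈ Finset.Icc 1 (p-1), (ζ ^ m) ^ j
      = (if p ∣ m then (p : K) else 0) - 1 := by
    intro m
    have h0 : (0 : ℕ) ∉ Finset.Icc 1 (p-1) := by simp
    have h1 := Finset.sum_insert (f := fun j => (ζ ^ m) ^ j) h0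
    rw [hins, hfull m] at h1
    simp only [pow_zero] at h1
    linear_combination -h1
  -- F values
  have hgm : ∀ j, g j * (ζ - 1) = ζ ^ j - 1 := fun j => geom_sum_mul ζ j
  have hFval : ∀ j ∈ Finset.Icc 1 (p-1), (ζ ^ j - 1) * F j = (p : K) := by
    intro j hj
    rw [Finset.mem_Icc] at hj
    have hnd : ¬ p ∣ j := fun h => by have := Nat.le_of_dvd (by omega) h; omega
    have h1 := aux_fsum (ζ ^ j) p
    have h2 : (ζ ^ j) ^ p = 1 := by
      rw [← pow_mul, mul_comm j p, pow_mul, hζ.pow_eq_one, one_pow]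
    have h3' := hfull j
    rw [if_neg hnd] at h3'
    rw [h2, h3', mul_one] at h1
    rw [hFdef]
    simp only []
    rw [h1]; ring
  -- g nonzero
  have hg0 : ∀ j ∈ Finset.Icc 1 (p-1), g j ≠ 0 := by
    intro j hj h
    have h1 := hFval j hj
    have h2 := hgm j
    rw [h, zero_mul] at h2
    rw [← h2, zero_mul] at h1
    exact hpK h1.symm
  -- the double sum
  have hsq : ∀ j : ℕ, (F j) ^ 2
      = ∑ k ∈ Finset.range p, ∑ l ∈ Finset.range p, ((k * l : ℕ) : K) * (ζ ^ (k + l)) ^ j := by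
    intro j
    rw [hFdef]
    simp only []
    rw [sq, Finset.sum_mul_sum]
    refine Finset.sum_congr rfl fun k _ => Finset.sum_congr rfl fun l _ => ?_
    rw [pow_right_comm ζ (k+l) j, pow_add]
    push_cast
    ring
  set s : K := ∑ k ∈ Finset.range p, (k : K) with hsdef
  set t : K := ∑ k ∈ Finset.range p, (k : K) ^ 2 with htdef
  have hdiv_iff : ∀ k l : ℕ, k < p → l < p → (p ∣ k + l ↔ k + l = 0 ∨ k + l = p) := by
    intro k l hk hl
    constructor
    · rintro ⟨c, hc⟩
      have hc1 : c ≤ 1 := by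
        by_contra h2
        push_neg at h2
        have : p * 2 ≤ p * c := Nat.mul_le_mul_left p h2
        omega
      interval_cases c <;> omega
    · rintro (h | h)
      · rw [h]; exact dvd_zero p
      · rw [h]
  have hB : ∀ k ∈ Finset.range p,
      ∑ l ∈ Finset.range p, ((k * l : ℕ) : K) * (if p ∣ k + l then (p : K) else 0)
        = ((k * (p - k) : ℕ) : K) * (p : K) := by
    intro k hk
    rw [Finset.mem_range] at hk
    rcases Nat.eq_zero_or_pos k with rfl | hk1
    · simp
    · have hl : ∀ l ∈ Finset.range p,
          ((k * l : ℕ) : K) * (if p ∣ k + l then (p : K) else 0)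
            = if l = p - k then ((k * l : ℕ) : K) * (p : K) else 0 := by
        intro l hlr
        rw [Finset.mem_range] at hlr
        by_cases h : p ∣ k + l
        · have h1 := (hdiv_iff k l hk hlr).1 h
          have hle : l = p - k := by omega
          rw [if_pos h, if_pos hle]
        · have hne : l ≠ p - k := fun e => h (by rw [e]; exact ⟨1, by omega⟩)
          rw [if_neg h, if_neg hne, mul_zero]
      rw [Finset.sum_congr rfl hl,
        Finset.sum_ite_eq' (Finset.range p) (p - k) (fun l => ((k * l : ℕ) : K) * (p : K)),
        if_pos (Finset.mem_range.2 (by omega))]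
  have hSB : ∑ k ∈ Finset.range p, ((k * (p - k) : ℕ) : K) = (p : K) * s - t := by
    rw [hsdef, htdef, Finset.mul_sum, ← Finset.sum_sub_distrib]
    refine Finset.sum_congr rfl fun k hk => ?_
    rw [Finset.mem_range] at hk
    rw [Nat.cast_mul, Nat.cast_sub hk.le]
    ring
  have hA : ∑ j ∈ Finset.Icc 1 (p-1), (F j) ^ 2 = ((p : K) * s - t) * (p : K) - s * s := by
    calc ∑ j ∈ Finset.Icc 1 (p-1), (F j) ^ 2
        = ∑ k ∈ Finset.range p, ∑ l ∈ Finset.range p,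
            ((k * l : ℕ) : K) * ((if p ∣ k + l then (p : K) else 0) - 1) := by
          simp only [hsq]
          rw [Finset.sum_comm]
          refine Finset.sum_congr rfl fun k _ => ?_
          rw [Finset.sum_comm]
          refine Finset.sum_congr rfl fun l _ => ?_
          rw [← Finset.mul_sum, hIcc]
      _ = (∑ k ∈ Finset.range p, ∑ l ∈ Finset.range p,
            ((k * l : ℕ) : K) * (if p ∣ k + l then (p : K) else 0))
          - ∑ k ∈ Finset.range p, ∑ l ∈ Finset.range p, ((k * l : ℕ) : K) := by
          simp only [mul_sub, mul_one, Finset.sum_sub_distrib]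
      _ = ((p : K) * s - t) * (p : K) - s * s := by
          rw [Finset.sum_congr rfl hB, ← Finset.sum_mul, hSB]
          congr 1
          rw [hsdef, Finset.sum_mul_sum]
          refine Finset.sum_congr rfl fun k _ => Finset.sum_congr rfl fun l _ => ?_
          push_cast; ring
  -- numeric identity
  obtain ⟨e, he⟩ := aux_div12 hp h3
  have hc : (p - 1) * (p - 5) / 12 = e := by rw [he]; exact Nat.mul_div_cancel_left e (by norm_num)
  have heK : 12 * (e : K) = ((p : K) - 1) * ((p : K) - 5) := by
    have := congrArg (fun n : ℕ => (n : K)) he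
    push_cast [Nat.cast_sub (by omega : 1 ≤ p), Nat.cast_sub hp5] at this
    linear_combination -this
  have hs : s = (p : K) * ((p : K) - 1) / 2 := by
    have := aux_s1 (K := K) p
    rw [← hsdef] at this
    field_simp
    linear_combination this
  have ht : t = (p : K) * ((p : K) - 1) * (2 * (p : K) - 1) / 6 := by
    have := aux_s2 (K := K) p
    rw [← htdef] at this
    field_simp
    linear_combination this
  have hAfin : ∑ j ∈ Finset.Icc 1 (p-1), (F j) ^ 2 = -((e : K)) * (p : K) ^ 2 := by
    rw [hA, hs, ht]
    linear_combination (p:K)^2 / 12 * heK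
  -- inverses
  have hinv : ∀ j ∈ Finset.Icc 1 (p-1), (g j)⁻¹ = (ζ - 1) * F j / (p : K) := by
    intro j hj
    have h1 : g j * ((ζ - 1) * F j / (p : K)) = 1 := by
      have h2 := hgm j
      calc g j * ((ζ - 1) * F j / (p : K)) = (g j * (ζ - 1)) * F j / (p : K) := by ring
        _ = (p : K) / (p : K) := by rw [h2, hFval j hj]
        _ = 1 := div_self hpK
    exact inv_eq_of_mul_eq_one_right h1
  calc ∑ j ∈ Finset.Icc 1 (p-1), ((g j)⁻¹) ^ 2
      = ∑ j ∈ Finset.Icc 1 (p-1), ((ζ - 1) ^ 2 / (p : K) ^ 2) * (F j) ^ 2 := by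
        refine Finset.sum_congr rfl fun j hj => ?_
        rw [hinv j hj]; ring
    _ = ((ζ - 1) ^ 2 / (p : K) ^ 2) * ∑ j ∈ Finset.Icc 1 (p-1), (F j) ^ 2 := by
        rw [Finset.mul_sum]
    _ = -((((p-1)*(p-5)/12 : ℕ)) : K) * (1 - ζ) ^ 2 := by
        rw [hAfin, hc]
        field_simp
        ring

/-- For a prime `p > 3`,
`∑_{j=1}^{p-1} 1/[j]_q² ≡ -((p-1)(p-5)/12)(1-q)² (mod [p]_q)` in the localization of
`ℚ[q]` at `[p]_q`. -/
theorem q_sum_inv_sq (p : ℕ) (hp : p.Prime) (h3 : 3 < p) :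
    ModPow p 1 ((∑ j ∈ Finset.Icc 1 (p-1), (Φ (qnum j))⁻¹^2)
      + Φ ((((p-1)*(p-5)/12 : ℕ) : ℚ[X]) * (1 - X)^2)) := by
  haveI : Fact p.Prime := ⟨hp⟩
  have hp0 : 0 < p := hp.pos
  haveI : NeZero p := ⟨hp.ne_zero⟩
  haveI : NeZero ((p : ℕ) : ℚ) := ⟨Nat.cast_ne_zero.2 hp.ne_zero⟩
  set K := CyclotomicField p ℚ with hKdef
  haveI : IsCyclotomicExtension {p} ℚ K := CyclotomicField.isCyclotomicExtension p ℚ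
  set ζ : K := IsCyclotomicExtension.zeta p ℚ K with hζdef
  have hζ : IsPrimitiveRoot ζ p := IsCyclotomicExtension.zeta_spec p ℚ K
  haveI : CharZero K := charZero_of_injective_algebraMap (algebraMap ℚ K).injective
  have hmin : qnum p = minpoly ℚ ζ := by
    rw [qnum, ← Polynomial.cyclotomic_prime ℚ p]
    exact Polynomial.cyclotomic_eq_minpoly_rat hζ hp0
  have haq : ∀ n, aeval ζ (qnum n) = ∑ i ∈ Finset.range n, ζ ^ i := by
    intro n; rw [qnum, map_sum]; simp
  set G : ℕ → K := fun n => ∑ i ∈ Finset.range n, ζ ^ i with hGdef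
  have hg0 : ∀ j ∈ Finset.Icc 1 (p-1), G j ≠ 0 := by
    intro j hj h
    rw [Finset.mem_Icc] at hj
    have h' : (∑ i ∈ Finset.range j, ζ ^ i) = 0 := h
    have h1 := geom_sum_mul ζ j
    rw [h', zero_mul] at h1
    have h2 : ζ ^ j = 1 := by linear_combination -h1
    have h3' := (hζ.pow_eq_one_iff_dvd j).1 h2
    have := Nat.le_of_dvd (by omega) h3'
    omega
  have hq0 : ∀ j ∈ Finset.Icc 1 (p-1), qnum j ≠ 0 := by
    intro j hj h
    apply hg0 j hj
    have h2 := haq j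
    rw [h, map_zero] at h2
    exact h2.symm
  have hqp0 : ∀ j ∈ Finset.Icc 1 (p-1), Φ (qnum j) ≠ 0 := by
    intro j hj h
    exact hq0 j hj (RatFunc.algebraMap_injective ℚ (by rw [h, map_zero] : Φ (qnum j) = Φ 0))
  set b : ℚ[X] := ∏ j ∈ Finset.Icc 1 (p-1), (qnum j) ^ 2 with hbdef
  have hirr : Irreducible (qnum p) := by
    rw [qnum, ← Polynomial.cyclotomic_prime ℚ p]
    exact Polynomial.cyclotomic.irreducible_rat hp0
  have hprime : Prime (qnum p) := hirr.prime
  have hndvd_q : ∀ j ∈ Finset.Icc 1 (p-1), ¬ qnum p ∣ qnum j := by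
    rintro j hj ⟨c, hc⟩
    apply hg0 j hj
    have h2 := haq j
    rw [hc, map_mul, hmin, minpoly.aeval, zero_mul] at h2
    exact h2.symm
  have hnb : ¬ qnum p ∣ b := by
    intro h
    obtain ⟨j, hj, hd⟩ := hprime.exists_mem_finset_dvd h
    exact hndvd_q j hj (hprime.dvd_of_dvd_pow hd)
  have hkey := key_sum hp h3 hζ
  set D : ℚ[X] := (∑ j ∈ Finset.Icc 1 (p-1), ∏ k ∈ (Finset.Icc 1 (p-1)).erase j, (qnum k) ^ 2)
      + (((p-1)*(p-5)/12 : ℕ) : ℚ[X]) * (1 - X) ^ 2 * b with hDdef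
  have haevD : aeval ζ D = 0 := by
    rw [hDdef, map_add, map_sum, map_mul, map_mul, map_pow, map_sub, map_one, aeval_X,
      map_natCast]
    have h2 : ∀ j ∈ Finset.Icc 1 (p-1),
        (aeval ζ) (∏ k ∈ (Finset.Icc 1 (p-1)).erase j, (qnum k) ^ 2)
          = ((G j)⁻¹) ^ 2 * ∏ k ∈ Finset.Icc 1 (p-1), (G k) ^ 2 := by
      intro j hj
      rw [map_prod]
      simp only [map_pow, haq]
      rw [← Finset.mul_prod_erase _ (fun k => (G k) ^ 2) hj, ← mul_assoc, ← mul_pow,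
        inv_mul_cancel₀ (hg0 j hj), one_pow, one_mul]
    rw [Finset.sum_congr rfl h2, ← Finset.sum_mul, hkey]
    have h3' : (aeval ζ) b = ∏ k ∈ Finset.Icc 1 (p-1), (G k) ^ 2 := by
      rw [hbdef, map_prod]; simp only [map_pow, haq]; rfl
    rw [h3']
    ring
  have hdvdD : qnum p ∣ D := hmin ▸ minpoly.dvd ℚ ζ haevD
  obtain ⟨a, ha⟩ := hdvdD
  refine ⟨a, b, hnb, ?_⟩
  rw [pow_one, ← ha, hDdef, map_add, map_sum, add_mul, Finset.sum_mul]
  congr 1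
  · refine Finset.sum_congr rfl fun j hj => ?_
    have hb' : b = (qnum j) ^ 2 * ∏ k ∈ (Finset.Icc 1 (p-1)).erase j, (qnum k) ^ 2 :=
      (Finset.mul_prod_erase _ _ hj).symm
    rw [hb', map_mul, map_pow, ← mul_assoc, ← mul_pow, inv_mul_cancel₀ (hqp0 j hj),
      one_pow, one_mul]
  · simp only [map_mul]
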